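/- Fix d ≥ 1, a ∈ ℝ, c₁ > 0, γ₁ ∈ (0,1], an accuracy ε ∈ (0, c₁/(132d·2^{3+γ₁})), and let κ := (c₁/(528d))^{d/(1+γ₁)}. Then for every positive integer n < κ/ε^{d/(1+γ₁)} and every deterministic algorithm A, there exists a (c₁,γ₁)-gradient-Hölder function f : [0,1]^d → ℝ such that the output S_n of A run on f after n queries is not an ε-approximation of the level set {f = a}. -/

import Mathlib

noncomputable section

def unitCube (d : ℕ) : Set (Fin d → ℝ) := Set.Icc 0 1

/-- A deterministic sequential algorithm. -/
structure Algorithm (d : ℕ) where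
  query : (n : ℕ) → (Fin n → ℝ) → (Fin d → ℝ)
  query_mem : ∀ n h, query n h ∈ unitCube d
  output : (n : ℕ) → (Fin n → ℝ) → Set (Fin d → ℝ)
  output_sub : ∀ n h, output n h ⊆ unitCube d

/-- The `(n+1)`-st query point of algorithm `A` run on `f`. -/
noncomputable def Algorithm.point {d : ℕ} (A : Algorithm d) (f : (Fin d → ℝ) → ℝ) :
    ℕ → (Fin d → ℝ)
  | n => A.query n fun i : Fin n => f (Algorithm.point A f i)
termination_by n => n
decreasing_by exact i.isLt

/-- The output set of algorithm `A` run on `f` after `n` queries. -/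
def Algorithm.outputAfter {d : ℕ} (A : Algorithm d) (f : (Fin d → ℝ) → ℝ) (n : ℕ) :
    Set (Fin d → ℝ) :=
  A.output n fun i : Fin n => f (A.point f i)

def IsEpsApprox (d : ℕ) (f : (Fin d → ℝ) → ℝ) (a ε : ℝ) (S : Set (Fin d → ℝ)) : Prop :=
  {x ∈ unitCube d | f x = a} ⊆ S ∧ S ⊆ {x ∈ unitCube d | |f x - a| ≤ ε}

/-- The `j`-th partial derivatives of `F`, collected into a vector of `Fin d → ℝ`. -/
noncomputable def gradVec (d : ℕ) (F : (Fin d → ℝ) → ℝ) (x : Fin d → ℝ) : Fin d → ℝ :=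
  fun j => fderiv ℝ F x (Pi.single j 1)

/-- `f` is `(c₁,γ₁)`-gradient-Hölder on `E`: it is the restriction to `E` of a `C¹` function
on `ℝ^d` whose gradient is `(c₁,γ₁)`-Hölder on `E` w.r.t. the sup-norm. -/
def GradHolderOn (d : ℕ) (c₁ γ₁ : ℝ) (E : Set (Fin d → ℝ)) (f : (Fin d → ℝ) → ℝ) : Prop :=
  ∃ F : (Fin d → ℝ) → ℝ, ContDiff ℝ 1 F ∧ Set.EqOn f F E ∧
    ∀ x ∈ E, ∀ y ∈ E, ‖gradVec d F x - gradVec d F y‖ ≤ c₁ * ‖x - y‖ ^ γ₁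

def clmp (s : ℝ) : ℝ := max (min 1 s) (-1)

lemma clmp_mem (s : ℝ) : clmp s ∈ Set.Icc (-1:ℝ) 1 := by
  constructor
  · exact le_max_right _ _
  · simp only [clmp, max_le_iff]
    constructor <;> [exact min_le_left _ _; linarith]

lemma clmp_lip (s t : ℝ) : |clmp s - clmp t| ≤ |s - t| := by
  calc |clmp s - clmp t| ≤ |min 1 s - min 1 t| := abs_max_sub_max_le_abs _ _ _
    _ ≤ max |(1:ℝ) - 1| |s - t| := abs_min_sub_min_le_max _ _ _ _
    _ ≤ |s - t| := by simp

lemma clmp_of_mem {s : ℝ} (h : s ∈ Set.Icc (-1:ℝ) 1) : clmp s = s := by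
  simp only [clmp]
  rw [min_eq_right h.2, max_eq_left h.1]

def uu (t : ℝ) : ℝ := max (1 - t^2) 0
def psi (t : ℝ) : ℝ := (uu t)^2
def vv (t : ℝ) : ℝ := t * uu t
def psiD (t : ℝ) : ℝ := -4 * vv t

lemma uu_nonneg (t : ℝ) : 0 ≤ uu t := le_max_right _ _
lemma uu_le_one (t : ℝ) : uu t ≤ 1 := by
  simp only [uu, max_le_iff]; constructor <;> nlinarith [sq_nonneg t]
lemma uu_of_le {t : ℝ} (h : t^2 ≤ 1) : uu t = 1 - t^2 := max_eq_left (by linarith)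
lemma uu_of_ge {t : ℝ} (h : 1 ≤ t^2) : uu t = 0 := max_eq_right (by linarith)

lemma psi_nonneg (t : ℝ) : 0 ≤ psi t := sq_nonneg _
lemma psi_le_one (t : ℝ) : psi t ≤ 1 := by
  have h1 := uu_nonneg t; have h2 := uu_le_one t; rw [psi]; nlinarith
lemma psi_zero : psi 0 = 1 := by norm_num [psi, uu]
lemma psi_eq_zero {t : ℝ} (h : 1 ≤ |t|) : psi t = 0 := by
  have : (1:ℝ) ≤ t^2 := by nlinarith [abs_nonneg t, sq_abs t]
  simp [psi, uu_of_ge this]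

lemma sq_le_one_of_mem {s : ℝ} (h : s ∈ Set.Icc (-1:ℝ) 1) : s^2 ≤ 1 := by
  nlinarith [h.1, h.2]

lemma psi_clmp (s : ℝ) : psi (clmp s) = psi s := by
  rcases le_or_gt (s^2) 1 with h | h
  · rw [clmp_of_mem ⟨by nlinarith, by nlinarith⟩]
  · have h1 : uu s = 0 := uu_of_ge h.le
    have h2 : (clmp s)^2 = 1 := by
      rcases le_or_gt 1 s with hs | hs
      · have : clmp s = 1 := by
          simp only [clmp]; rw [min_eq_left hs]; norm_num
        rw [this]; norm_num
      · have hs' : s < -1 := by nlinarith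
        have : clmp s = -1 := by
          simp only [clmp]; rw [min_eq_right (by linarith)]
          rw [max_eq_right (by linarith)]
        rw [this]; norm_num
    simp [psi, h1, uu_of_ge h2.ge]

lemma vv_clmp (s : ℝ) : vv (clmp s) = vv s := by
  rcases le_or_gt (s^2) 1 with h | h
  · rw [clmp_of_mem ⟨by nlinarith, by nlinarith⟩]
  · have h1 : uu s = 0 := uu_of_ge h.le
    have h2 : (1:ℝ) ≤ (clmp s)^2 := by
      rcases le_or_gt 1 s with hs | hs
      · have : clmp s = 1 := by
          simp only [clmp]; rw [min_eq_left hs]; norm_num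
        rw [this]; norm_num
      · have hs' : s < -1 := by nlinarith
        have : clmp s = -1 := by
          simp only [clmp]; rw [min_eq_right (by linarith)]
          rw [max_eq_right (by linarith)]
        rw [this]; norm_num
    simp [vv, h1, uu_of_ge h2]

lemma vv_lip_Icc {s t : ℝ} (hs : s ∈ Set.Icc (-1:ℝ) 1) (ht : t ∈ Set.Icc (-1:ℝ) 1) :
    |vv s - vv t| ≤ 2 * |s - t| := by
  have hs2 := sq_le_one_of_mem hs; have ht2 := sq_le_one_of_mem ht
  rw [vv, vv, uu_of_le hs2, uu_of_le ht2]
  have key : s * (1 - s^2) - t * (1 - t^2) = (s - t) * (1 - (s^2 + s*t + t^2)) := by ring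
  rw [key, abs_mul]
  have h1 : |1 - (s^2 + s*t + t^2)| ≤ 2 := by
    rw [abs_le]; constructor <;> nlinarith [sq_nonneg (s+t), sq_nonneg (s-t)]
  calc |s - t| * |1 - (s^2 + s*t + t^2)| ≤ |s - t| * 2 := by
        exact mul_le_mul_of_nonneg_left h1 (abs_nonneg _)
    _ = 2 * |s - t| := by ring

lemma psi_lip_Icc {s t : ℝ} (hs : s ∈ Set.Icc (-1:ℝ) 1) (ht : t ∈ Set.Icc (-1:ℝ) 1) :
    |psi s - psi t| ≤ 4 * |s - t| := by
  have hs2 := sq_le_one_of_mem hs; have ht2 := sq_le_one_of_mem ht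
  rw [psi, psi, uu_of_le hs2, uu_of_le ht2]
  have key : (1 - s^2)^2 - (1 - t^2)^2 = (t - s) * ((t + s) * (2 - s^2 - t^2)) := by ring
  rw [key, abs_mul, abs_mul]
  have h1 : |t + s| ≤ 2 := by rw [abs_le]; constructor <;> nlinarith [hs.1, hs.2, ht.1, ht.2]
  have h2 : |2 - s^2 - t^2| ≤ 2 := by
    rw [abs_le]; constructor <;> nlinarith [sq_nonneg s, sq_nonneg t]
  have : |t - s| = |s - t| := abs_sub_comm _ _
  rw [this]
  calc |s - t| * (|t + s| * |2 - s^2 - t^2|) ≤ |s - t| * (2 * 2) := by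
        apply mul_le_mul_of_nonneg_left _ (abs_nonneg _)
        exact mul_le_mul h1 h2 (abs_nonneg _) (by norm_num)
    _ = 4 * |s - t| := by ring

lemma vv_lip (s t : ℝ) : |vv s - vv t| ≤ 2 * |s - t| :=
  calc |vv s - vv t| = |vv (clmp s) - vv (clmp t)| := by rw [vv_clmp, vv_clmp]
    _ ≤ 2 * |clmp s - clmp t| := vv_lip_Icc (clmp_mem s) (clmp_mem t)
    _ ≤ 2 * |s - t| := by linarith [clmp_lip s t]

lemma psi_lip (s t : ℝ) : |psi s - psi t| ≤ 4 * |s - t| :=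
  calc |psi s - psi t| = |psi (clmp s) - psi (clmp t)| := by rw [psi_clmp, psi_clmp]
    _ ≤ 4 * |clmp s - clmp t| := psi_lip_Icc (clmp_mem s) (clmp_mem t)
    _ ≤ 4 * |s - t| := by linarith [clmp_lip s t]

lemma psiD_lip (s t : ℝ) : |psiD s - psiD t| ≤ 8 * |s - t| := by
  have : psiD s - psiD t = -4 * (vv s - vv t) := by rw [psiD, psiD]; ring
  rw [this, abs_mul]
  have := vv_lip s t
  rw [show |(-4:ℝ)| = 4 by norm_num]
  linarith

lemma abs_vv_le (t : ℝ) : |vv t| ≤ 1 := by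
  rw [← vv_clmp]
  have h := clmp_mem t
  rw [vv, abs_mul]
  have h1 : |clmp t| ≤ 1 := abs_le.mpr ⟨h.1, h.2⟩
  have h2 : |uu (clmp t)| ≤ 1 := by
    rw [abs_of_nonneg (uu_nonneg _)]; exact uu_le_one _
  nlinarith [abs_nonneg (clmp t), abs_nonneg (uu (clmp t))]

lemma abs_psiD_le (t : ℝ) : |psiD t| ≤ 4 := by
  rw [psiD, abs_mul, show |(-4:ℝ)| = 4 by norm_num]
  nlinarith [abs_vv_le t]

lemma hasDerivAt_psi (t : ℝ) : HasDerivAt psi (psiD t) t := by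
  rcases lt_trichotomy (t^2) 1 with h | h | h
  · have hev : psi =ᶠ[nhds t] (fun s => (1 - s^2)^2) := by
      have hop : IsOpen {s : ℝ | s^2 < 1} := isOpen_lt (by continuity) continuous_const
      filter_upwards [hop.mem_nhds h] with s hs
      simp [psi, uu_of_le (le_of_lt hs)]
    have h1 : HasDerivAt (fun s : ℝ => 1 - s^2) (-(2*t)) t := by
      simpa using ((hasDerivAt_pow 2 t).const_sub 1)
    have hpoly : HasDerivAt (fun s : ℝ => (1 - s^2)^2) (psiD t) t := by
      have h2 := h1.pow 2
      refine h2.congr_deriv (Eq.symm ?_)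
      rw [psiD, vv, uu_of_le h.le]; push_cast; ring
    exact hpoly.congr_of_eventuallyEq hev
  · -- boundary case t^2 = 1
    have hpsit : psi t = 0 := by simp [psi, uu_of_ge h.ge]
    have hpsiD : psiD t = 0 := by simp [psiD, vv, uu_of_ge h.ge]
    rw [hpsiD, hasDerivAt_iff_isLittleO]
    rw [Asymptotics.isLittleO_iff]
    intro c hc
    have habs : |t| = 1 := by nlinarith [sq_abs t, abs_nonneg t]
    rw [Metric.eventually_nhds_iff]
    refine ⟨min (c/9) 1, lt_min (by positivity) one_pos, fun s hs => ?_⟩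
    have hd : |s - t| < min (c/9) 1 := by
      simpa [Real.dist_eq] using hs
    have hst : |s + t| ≤ 3 := by
      have : |s - t| < 1 := lt_of_lt_of_le hd (min_le_right _ _)
      have := abs_sub_abs_le_abs_sub s t
      have h3 : |s| ≤ 2 := by nlinarith [abs_sub_abs_le_abs_sub s t]
      calc |s + t| ≤ |s| + |t| := abs_add_le _ _
        _ ≤ 3 := by rw [habs]; linarith
    have hbound : psi s ≤ (s - t)^2 * 9 := by
      have h4 : psi s ≤ (1 - s^2)^2 := by
        rcases le_or_gt (s^2) 1 with h5 | h5
        · rw [psi, uu_of_le h5]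
        · rw [psi, uu_of_ge h5.le]; nlinarith [sq_nonneg (1 - s^2)]
      have h6 : (1 - s^2)^2 = (s - t)^2 * (s + t)^2 := by
        have : (1:ℝ) = t^2 := h.symm
        nlinarith [this]
      have h7 : (s + t)^2 ≤ 9 := by nlinarith [abs_nonneg (s+t), sq_abs (s+t)]
      calc psi s ≤ (1 - s^2)^2 := h4
        _ = (s - t)^2 * (s + t)^2 := h6
        _ ≤ (s - t)^2 * 9 := by nlinarith [sq_nonneg (s - t)]
    have hfin : ‖psi s - psi t - (s - t) • (0:ℝ)‖ ≤ c * ‖s - t‖ := by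
      simp only [hpsit, smul_zero, sub_zero, Real.norm_eq_abs]
      rw [abs_of_nonneg (psi_nonneg s)]
      have h8 : |s - t| ≤ c / 9 := le_of_lt (lt_of_lt_of_le hd (min_le_left _ _))
      calc psi s ≤ (s - t)^2 * 9 := hbound
        _ = 9 * |s - t| * |s - t| := by rw [← sq_abs]; ring
        _ ≤ 9 * (c/9) * |s - t| := by nlinarith [abs_nonneg (s - t)]
        _ = c * |s - t| := by ring
    exact hfin
  · have hev : psi =ᶠ[nhds t] (fun _ => (0:ℝ)) := by
      have hop : IsOpen {s : ℝ | 1 < s^2} := isOpen_lt continuous_const (by continuity)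
      filter_upwards [hop.mem_nhds h] with s hs
      simp [psi, uu_of_ge (le_of_lt hs)]
    have hpsiD : psiD t = 0 := by simp [psiD, vv, uu_of_ge h.le]
    rw [hpsiD]
    exact (hasDerivAt_const t 0).congr_of_eventuallyEq hev

lemma contDiff_psi : ContDiff ℝ 1 psi := by
  rw [contDiff_one_iff_deriv]
  refine ⟨fun t => (hasDerivAt_psi t).differentiableAt, ?_⟩
  have hde : deriv psi = psiD := funext fun t => (hasDerivAt_psi t).deriv
  rw [hde]
  unfold psiD vv uu
  continuity


lemma prod_sub_prod_le {ι : Type*} [DecidableEq ι] (s : Finset ι) (a b : ι → ℝ)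
    (ha : ∀ i ∈ s, |a i| ≤ 1) (hb : ∀ i ∈ s, |b i| ≤ 1) :
    |∏ i ∈ s, a i - ∏ i ∈ s, b i| ≤ ∑ i ∈ s, |a i - b i| := by
  revert ha hb
  induction s using Finset.induction_on with
  | empty => intro _ _; simp
  | @insert j s' hj ih =>
    intro ha hb
    rw [Finset.prod_insert hj, Finset.prod_insert hj, Finset.sum_insert hj]
    have ha' : ∀ i ∈ s', |a i| ≤ 1 := fun i hi => ha i (Finset.mem_insert_of_mem hi)
    have hb' : ∀ i ∈ s', |b i| ≤ 1 := fun i hi => hb i (Finset.mem_insert_of_mem hi)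
    have ih' := ih ha' hb'
    have haj : |a j| ≤ 1 := ha j (Finset.mem_insert_self _ _)
    have hpb : |∏ i ∈ s', b i| ≤ 1 := by
      rw [Finset.abs_prod]
      apply Finset.prod_le_one
      · intro i _; exact abs_nonneg _
      · intro i hi; exact hb' i hi
    have key : a j * ∏ i ∈ s', a i - b j * ∏ i ∈ s', b i
        = a j * (∏ i ∈ s', a i - ∏ i ∈ s', b i) + (a j - b j) * ∏ i ∈ s', b i := by ring
    rw [key]
    calc |a j * (∏ i ∈ s', a i - ∏ i ∈ s', b i) + (a j - b j) * ∏ i ∈ s', b i|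
        ≤ |a j * (∏ i ∈ s', a i - ∏ i ∈ s', b i)| + |(a j - b j) * ∏ i ∈ s', b i| := abs_add_le _ _
      _ = |a j| * |∏ i ∈ s', a i - ∏ i ∈ s', b i| + |a j - b j| * |∏ i ∈ s', b i| := by
          rw [abs_mul, abs_mul]
      _ ≤ 1 * (∑ i ∈ s', |a i - b i|) + |a j - b j| * 1 := by
          exact add_le_add (mul_le_mul haj ih' (abs_nonneg _) zero_le_one)
            (mul_le_mul_of_nonneg_left hpb (abs_nonneg _))
      _ = |a j - b j| + ∑ i ∈ s', |a i - b i| := by ring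


section Bump
variable {d : ℕ}

def bumpF (d : ℕ) (a h ρ : ℝ) (z : Fin d → ℝ) (x : Fin d → ℝ) : ℝ :=
  a + h * ∏ k : Fin d, psi ((x k - z k)/ρ)

def bumpP (d : ℕ) (h ρ : ℝ) (z : Fin d → ℝ) (x : Fin d → ℝ) : Fin d → ℝ :=
  fun j => h * (psiD ((x j - z j)/ρ)/ρ * ∏ k ∈ Finset.univ.erase j, psi ((x k - z k)/ρ))

lemma hasFDerivAt_inner (z : Fin d → ℝ) {ρ : ℝ} (hρ : ρ ≠ 0) (k : Fin d) (x : Fin d → ℝ) :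
    HasFDerivAt (fun x : Fin d → ℝ => (x k - z k)/ρ)
      (ρ⁻¹ • (ContinuousLinearMap.proj k : (Fin d → ℝ) →L[ℝ] ℝ)) x := by
  have h1 : HasFDerivAt (fun x : Fin d → ℝ => x k)
      (ContinuousLinearMap.proj k : (Fin d → ℝ) →L[ℝ] ℝ) x :=
    (ContinuousLinearMap.proj k : (Fin d → ℝ) →L[ℝ] ℝ).hasFDerivAt
  have h2 := (h1.sub_const (z k)).const_mul ρ⁻¹
  have heq : (fun x : Fin d → ℝ => (x k - z k)/ρ) = (fun x : Fin d → ℝ => ρ⁻¹ * (x k - z k)) := by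
    funext y; rw [div_eq_inv_mul]
  rw [heq]
  exact h2

lemma hasFDerivAt_bumpF (a h : ℝ) {ρ : ℝ} (hρ : ρ ≠ 0) (z : Fin d → ℝ) (x : Fin d → ℝ) :
    HasFDerivAt (bumpF d a h ρ z)
      (∑ k : Fin d, (h * ((∏ l ∈ Finset.univ.erase k, psi ((x l - z l)/ρ)) * (psiD ((x k - z k)/ρ) * ρ⁻¹))) •
        (ContinuousLinearMap.proj k : (Fin d → ℝ) →L[ℝ] ℝ)) x := by
  have hg : ∀ k ∈ (Finset.univ : Finset (Fin d)),
      HasFDerivAt (fun x : Fin d → ℝ => psi ((x k - z k)/ρ))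
        ((psiD ((x k - z k)/ρ)) • (ρ⁻¹ • (ContinuousLinearMap.proj k : (Fin d → ℝ) →L[ℝ] ℝ))) x :=
    fun k _ => (hasDerivAt_psi ((x k - z k)/ρ)).comp_hasFDerivAt (f := fun x : Fin d → ℝ => (x k - z k)/ρ) x (hasFDerivAt_inner z hρ k x)
  have hprod := HasFDerivAt.finset_prod hg
  have := (hprod.const_mul h).const_add a
  refine this.congr_fderiv (Eq.symm ?_)
  rw [Finset.smul_sum]
  apply Finset.sum_congr rfl
  intro k _
  rw [smul_smul, smul_smul, smul_smul]
  congr 1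
  ring

lemma gradVec_bumpF (a h : ℝ) {ρ : ℝ} (hρ : ρ ≠ 0) (z : Fin d → ℝ) (x : Fin d → ℝ) :
    gradVec d (bumpF d a h ρ z) x = bumpP d h ρ z x := by
  funext j
  have hF := hasFDerivAt_bumpF a h hρ z x
  rw [gradVec, hF.fderiv]
  rw [ContinuousLinearMap.sum_apply]
  rw [Finset.sum_eq_single j]
  · simp only [ContinuousLinearMap.smul_apply, ContinuousLinearMap.proj_apply,
      Pi.single_eq_same, smul_eq_mul, mul_one, bumpP]
    ring
  · intro k _ hk
    simp only [ContinuousLinearMap.smul_apply, ContinuousLinearMap.proj_apply, smul_eq_mul]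
    rw [Pi.single_eq_of_ne hk]
    ring
  · intro hj; exact absurd (Finset.mem_univ j) hj

end Bump


section Bump2
variable {d : ℕ} {a h ρ : ℝ} {z : Fin d → ℝ}

lemma contDiff_bumpF (a h : ℝ) (ρ : ℝ) (z : Fin d → ℝ) : ContDiff ℝ 1 (bumpF d a h ρ z) := by
  apply ContDiff.add contDiff_const
  apply ContDiff.mul contDiff_const
  apply contDiff_prod
  intro k _
  apply contDiff_psi.comp
  exact (((ContinuousLinearMap.proj k : (Fin d → ℝ) →L[ℝ] ℝ).contDiff).sub contDiff_const).div_const ρ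

lemma abs_prod_psi_le (x : Fin d → ℝ) (s : Finset (Fin d)) :
    |∏ k ∈ s, psi ((x k - z k)/ρ)| ≤ 1 := by
  rw [Finset.abs_prod]
  apply Finset.prod_le_one (fun i _ => abs_nonneg _)
  intro i _
  rw [abs_of_nonneg (psi_nonneg _)]
  exact psi_le_one _

lemma abs_bumpP_le (hρ : 0 < ρ) (hh : 0 ≤ h) (x : Fin d → ℝ) (j : Fin d) :
    |bumpP d h ρ z x j| ≤ h * 4 / ρ := by
  rw [bumpP, abs_mul, abs_mul, abs_of_nonneg hh, abs_div, abs_of_nonneg hρ.le]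
  have h1 := abs_psiD_le ((x j - z j)/ρ)
  have h2 := abs_prod_psi_le (z := z) (ρ := ρ) x (Finset.univ.erase j)
  have h3 : |psiD ((x j - z j) / ρ)| / ρ * |∏ k ∈ Finset.univ.erase j, psi ((x k - z k) / ρ)| ≤ 4 / ρ := by
    calc |psiD ((x j - z j) / ρ)| / ρ * |∏ k ∈ Finset.univ.erase j, psi ((x k - z k) / ρ)|
        ≤ |psiD ((x j - z j) / ρ)| / ρ * 1 := by
          apply mul_le_mul_of_nonneg_left h2 (by positivity)
      _ ≤ 4 / ρ := by rw [mul_one]; exact div_le_div_of_nonneg_right h1 hρ.le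
  calc h * (|psiD ((x j - z j) / ρ)| / ρ * |∏ k ∈ Finset.univ.erase j, psi ((x k - z k) / ρ)|)
      ≤ h * (4 / ρ) := mul_le_mul_of_nonneg_left h3 hh
    _ = h * 4 / ρ := by ring

lemma bumpP_lip (hρ : 0 < ρ) (hh : 0 ≤ h) (x y : Fin d → ℝ) (j : Fin d) :
    |bumpP d h ρ z x j - bumpP d h ρ z y j| ≤ h * (24 * d) / ρ^2 * ‖x - y‖ := by
  have hd : (1:ℝ) ≤ d := by exact_mod_cast j.pos
  set tx := fun k => (x k - z k)/ρ with htx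
  set ty := fun k => (y k - z k)/ρ with hty
  have hco : ∀ k, |tx k - ty k| ≤ ‖x - y‖ / ρ := by
    intro k
    have he : tx k - ty k = (x k - y k)/ρ := by rw [htx, hty]; ring
    rw [he, abs_div, abs_of_nonneg hρ.le]
    apply div_le_div_of_nonneg_right _ hρ.le
    calc |x k - y k| = ‖(x - y) k‖ := by simp [Real.norm_eq_abs]
      _ ≤ ‖x - y‖ := norm_le_pi_norm _ k
  set Px := ∏ k ∈ Finset.univ.erase j, psi (tx k) with hPx
  set Py := ∏ k ∈ Finset.univ.erase j, psi (ty k) with hPy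
  have hPxle : |Px| ≤ 1 := abs_prod_psi_le x _
  have hPyle : |Py| ≤ 1 := abs_prod_psi_le y _
  have hprodd : |Px - Py| ≤ ∑ k ∈ Finset.univ.erase j, |psi (tx k) - psi (ty k)| :=
    prod_sub_prod_le _ _ _ (fun i _ => by rw [abs_of_nonneg (psi_nonneg _)]; exact psi_le_one _)
      (fun i _ => by rw [abs_of_nonneg (psi_nonneg _)]; exact psi_le_one _)
  have hsum : ∑ k ∈ Finset.univ.erase j, |psi (tx k) - psi (ty k)|
      ≤ (d : ℝ) * (4 * (‖x - y‖ / ρ)) := by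
    calc ∑ k ∈ Finset.univ.erase j, |psi (tx k) - psi (ty k)|
        ≤ ∑ k ∈ Finset.univ.erase j, 4 * (‖x - y‖ / ρ) := by
          apply Finset.sum_le_sum
          intro k _
          exact (psi_lip _ _).trans (by nlinarith [hco k, abs_nonneg (tx k - ty k)])
      _ = ((Finset.univ.erase j).card : ℝ) * (4 * (‖x - y‖ / ρ)) := by
          rw [Finset.sum_const, nsmul_eq_mul]
      _ ≤ (d : ℝ) * (4 * (‖x - y‖ / ρ)) := by
          apply mul_le_mul_of_nonneg_right _ (by positivity)
          have hcard : (Finset.univ.erase j).card ≤ d := by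
            calc (Finset.univ.erase j).card ≤ (Finset.univ : Finset (Fin d)).card :=
                  Finset.card_le_card (Finset.erase_subset _ _)
              _ = d := by simp
          exact_mod_cast hcard
  have key : bumpP d h ρ z x j - bumpP d h ρ z y j
      = h * ((psiD (tx j) - psiD (ty j))/ρ * Px) + h * (psiD (ty j)/ρ * (Px - Py)) := by
    show h * (psiD (tx j)/ρ * Px) - h * (psiD (ty j)/ρ * Py) = _
    ring
  have hnn : (0:ℝ) ≤ ‖x - y‖ / ρ := by positivity
  have t1 : |h * ((psiD (tx j) - psiD (ty j))/ρ * Px)| ≤ h * (8 * (‖x - y‖/ρ) / ρ) := by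
    rw [abs_mul, abs_of_nonneg hh, abs_mul, abs_div, abs_of_nonneg hρ.le]
    apply mul_le_mul_of_nonneg_left _ hh
    have h8 : |psiD (tx j) - psiD (ty j)| ≤ 8 * (‖x - y‖/ρ) := by
      calc |psiD (tx j) - psiD (ty j)| ≤ 8 * |tx j - ty j| := psiD_lip _ _
        _ ≤ 8 * (‖x - y‖/ρ) := by nlinarith [hco j]
    calc |psiD (tx j) - psiD (ty j)| / ρ * |Px| ≤ |psiD (tx j) - psiD (ty j)| / ρ * 1 :=
          mul_le_mul_of_nonneg_left hPxle (by positivity)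
      _ ≤ 8 * (‖x - y‖/ρ) / ρ := by
          rw [mul_one]; exact div_le_div_of_nonneg_right h8 hρ.le
  have t2 : |h * (psiD (ty j)/ρ * (Px - Py))| ≤ h * (4 / ρ * ((d:ℝ) * (4 * (‖x - y‖ / ρ)))) := by
    rw [abs_mul, abs_of_nonneg hh, abs_mul, abs_div, abs_of_nonneg hρ.le]
    apply mul_le_mul_of_nonneg_left _ hh
    apply mul_le_mul (div_le_div_of_nonneg_right (abs_psiD_le _) hρ.le)
      (hprodd.trans hsum) (abs_nonneg _) (by positivity)
  have hsimp : h * (8 * (‖x - y‖/ρ) / ρ) + h * (4 / ρ * ((d:ℝ) * (4 * (‖x - y‖ / ρ))))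
      = h * (8 + 16 * d) / ρ^2 * ‖x - y‖ := by
    field_simp
    ring
  calc |bumpP d h ρ z x j - bumpP d h ρ z y j|
      ≤ |h * ((psiD (tx j) - psiD (ty j))/ρ * Px)| + |h * (psiD (ty j)/ρ * (Px - Py))| := by
        rw [key]; exact abs_add_le _ _
    _ ≤ h * (8 * (‖x - y‖/ρ) / ρ) + h * (4 / ρ * ((d:ℝ) * (4 * (‖x - y‖ / ρ)))) := add_le_add t1 t2
    _ = h * (8 + 16 * d) / ρ^2 * ‖x - y‖ := hsimp
    _ ≤ h * (24 * d) / ρ^2 * ‖x - y‖ := by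
        apply mul_le_mul_of_nonneg_right _ (norm_nonneg _)
        apply div_le_div_of_nonneg_right _ (by positivity)
        nlinarith [hd, hh]
end Bump2


section Bump3
variable {d : ℕ} {a h ρ : ℝ} {z : Fin d → ℝ}

lemma bumpF_center (a h : ℝ) {ρ : ℝ} (hρ : ρ ≠ 0) (z : Fin d → ℝ) :
    bumpF d a h ρ z z = a + h := by
  have : ∀ k : Fin d, psi ((z k - z k)/ρ) = 1 := by
    intro k; rw [sub_self, zero_div, psi_zero]
  simp only [bumpF, this, Finset.prod_const_one, mul_one]

lemma bumpF_far {x : Fin d → ℝ} (hρ : 0 < ρ) (j : Fin d) (hj : ρ ≤ |x j - z j|) :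
    bumpF d a h ρ z x = a := by
  have h1 : (1:ℝ) ≤ |(x j - z j)/ρ| := by
    rw [abs_div, abs_of_nonneg hρ.le, le_div_iff₀ hρ]; linarith
  rw [bumpF, Finset.prod_eq_zero (Finset.mem_univ j) (psi_eq_zero h1)]
  ring

lemma interp {Δ t C B c₁ γ : ℝ} (hC : 0 < C) (hB : 0 < B) (hγ0 : 0 < γ) (hγ1 : γ ≤ 1)
    (h1 : Δ ≤ C * t) (h2 : Δ ≤ B) (ht : 0 ≤ t)
    (hc : C ^ γ * B ^ (1 - γ) ≤ c₁) : Δ ≤ c₁ * t ^ γ := by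
  have hc0 : 0 ≤ c₁ := le_trans (by positivity) hc
  rcases eq_or_lt_of_le ht with rfl | ht0
  · rw [Real.zero_rpow hγ0.ne', mul_zero]
    linarith [h1]
  · rcases le_total (C * t) B with hcb | hcb
    · have e1 : C * t = C ^ γ * t ^ γ * (C * t) ^ (1 - γ) := by
        rw [← Real.mul_rpow hC.le ht0.le, ← Real.rpow_add (by positivity)]
        norm_num
      calc Δ ≤ C * t := h1
        _ = C ^ γ * t ^ γ * (C*t)^(1-γ) := e1
        _ ≤ C ^ γ * t ^ γ * B^(1-γ) := by
            apply mul_le_mul_of_nonneg_left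
              (Real.rpow_le_rpow (by positivity) hcb (by linarith)) (by positivity)
        _ = C ^ γ * B^(1-γ) * t^γ := by ring
        _ ≤ c₁ * t^γ := mul_le_mul_of_nonneg_right hc (Real.rpow_nonneg ht0.le γ)
    · have e1 : B = B ^ γ * B ^ (1-γ) := by
        rw [← Real.rpow_add hB]; norm_num
      calc Δ ≤ B := h2
        _ = B^γ * B^(1-γ) := e1
        _ ≤ (C*t)^γ * B^(1-γ) :=
            mul_le_mul_of_nonneg_right (Real.rpow_le_rpow hB.le hcb hγ0.le)
              (Real.rpow_nonneg hB.le _)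
        _ = C^γ * t^γ * B^(1-γ) := by rw [Real.mul_rpow hC.le ht0.le]
        _ = C^γ*B^(1-γ)*t^γ := by ring
        _ ≤ c₁ * t^γ := mul_le_mul_of_nonneg_right hc (Real.rpow_nonneg ht0.le γ)

lemma gradHolder_bumpF {c₁ γ : ℝ} (hρ : 0 < ρ) (hh : 0 < h) (hd : 1 ≤ d)
    (hγ0 : 0 < γ) (hγ1 : γ ≤ 1)
    (hc : (h * (24 * d) / ρ^2) ^ γ * (h * 8 / ρ) ^ (1 - γ) ≤ c₁) :
    ∀ x y : Fin d → ℝ,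
      ‖gradVec d (bumpF d a h ρ z) x - gradVec d (bumpF d a h ρ z) y‖ ≤ c₁ * ‖x - y‖ ^ γ := by
  intro x y
  have hd0 : (0:ℝ) < d := by exact_mod_cast hd
  have hC : (0:ℝ) < h * (24 * d) / ρ^2 := by positivity
  have hB : (0:ℝ) < h * 8 / ρ := by positivity
  have hc0 : 0 ≤ c₁ := le_trans (by positivity) hc
  rw [gradVec_bumpF a h hρ.ne' z x, gradVec_bumpF a h hρ.ne' z y]
  rw [pi_norm_le_iff_of_nonneg (by positivity)]
  intro j
  rw [Pi.sub_apply, Real.norm_eq_abs]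
  apply interp hC hB hγ0 hγ1 (bumpP_lip hρ hh.le x y j) _ (norm_nonneg _) hc
  calc |bumpP d h ρ z x j - bumpP d h ρ z y j|
      ≤ |bumpP d h ρ z x j| + |bumpP d h ρ z y j| := abs_sub _ _
    _ ≤ h * 4 / ρ + h * 4 / ρ := add_le_add (abs_bumpP_le hρ hh.le x j) (abs_bumpP_le hρ hh.le y j)
    _ = h * 8 / ρ := by ring

end Bump3


section Traj
variable {d : ℕ}

lemma point_congr (A : Algorithm d) (f g : (Fin d → ℝ) → ℝ) (n : ℕ)
    (hfa : ∀ k, k < n → f (A.point f k) = g (A.point f k)) :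
    ∀ k, k < n → A.point g k = A.point f k := by
  intro k
  induction k using Nat.strong_induction_on with
  | _ k ih =>
    intro hk
    rw [Algorithm.point, Algorithm.point]
    have harg : (fun i : Fin k => g (A.point g i)) = (fun i : Fin k => f (A.point f i)) := by
      funext i
      rw [ih i i.isLt (lt_trans i.isLt hk), ← hfa i (lt_trans i.isLt hk)]
    rw [harg]

lemma outputAfter_congr (A : Algorithm d) (f g : (Fin d → ℝ) → ℝ) (n : ℕ)
    (hfa : ∀ k, k < n → f (A.point f k) = g (A.point f k)) :
    A.outputAfter g n = A.outputAfter f n := by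
  rw [Algorithm.outputAfter, Algorithm.outputAfter]
  have harg : (fun i : Fin n => g (A.point g i)) = (fun i : Fin n => f (A.point f i)) := by
    funext i
    rw [point_congr A f g n hfa i i.isLt, ← hfa i i.isLt]
  rw [harg]

lemma exists_far_center {m n : ℕ} (hcard : n < m ^ d) (p : Fin n → Fin d → ℝ) :
    ∃ c : Fin d → Fin m, ∀ i, (1:ℝ)/(2*m) ≤ ‖p i - (fun j => (2*((c j : ℕ):ℝ)+1)/(2*m))‖ := by
  by_contra hcon
  push_neg at hcon
  choose φ hφ using hcon
  have hinj : Function.Injective φ := by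
    intro c c' hcc
    by_contra hne
    obtain ⟨j, hj⟩ := Function.ne_iff.mp hne
    have hm : 0 < m := (c j).pos
    have hm' : (0:ℝ) < m := by exact_mod_cast hm
    set zc := (fun j => (2*((c j : ℕ):ℝ)+1)/(2*m)) with hzc
    set zc' := (fun j => (2*((c' j : ℕ):ℝ)+1)/(2*m)) with hzc'
    have hsep : (1:ℝ)/m ≤ ‖zc - zc'‖ := by
      have keynat : ∀ p q : ℕ, p < q → (1:ℝ) ≤ |(p:ℝ) - (q:ℝ)| := by
        intro p q hpq
        have hcast : ((p:ℝ)) + 1 ≤ q := by exact_mod_cast hpq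
        rw [abs_sub_comm, abs_of_nonneg (by linarith)]
        linarith
      have hjj : (1:ℝ) ≤ |((c j : ℕ):ℝ) - ((c' j : ℕ):ℝ)| := by
        have hne2 : (c j : ℕ) ≠ (c' j : ℕ) := fun hh => hj (Fin.ext hh)
        rcases lt_or_gt_of_ne hne2 with hlt | hlt
        · exact keynat _ _ hlt
        · rw [abs_sub_comm]; exact keynat _ _ hlt
      have : |zc j - zc' j| = |((c j : ℕ):ℝ) - ((c' j : ℕ):ℝ)| / m := by
        rw [hzc, hzc']
        rw [div_sub_div_same, ← abs_of_pos hm', ← abs_div]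
        congr 1
        field_simp
        rw [abs_of_pos hm']
        ring
      calc (1:ℝ)/m ≤ |((c j : ℕ):ℝ) - ((c' j : ℕ):ℝ)| / m := by
            apply div_le_div_of_nonneg_right hjj hm'.le
        _ = |zc j - zc' j| := this.symm
        _ = ‖(zc - zc') j‖ := by simp [Real.norm_eq_abs]
        _ ≤ ‖zc - zc'‖ := norm_le_pi_norm _ j
    have htri : ‖zc - zc'‖ < 1/m := by
      have h1 := hφ c
      have h2 := hφ c'
      rw [← hcc] at h2
      calc ‖zc - zc'‖ ≤ ‖zc - p (φ c)‖ + ‖p (φ c) - zc'‖ := by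
            have : zc - zc' = (zc - p (φ c)) + (p (φ c) - zc') := by abel
            rw [this]; exact norm_add_le _ _
        _ = ‖p (φ c) - zc‖ + ‖p (φ c) - zc'‖ := by rw [norm_sub_rev]
        _ < 1/(2*m) + 1/(2*m) := add_lt_add h1 h2
        _ = 1/m := by
            field_simp
            norm_num
    linarith
  have hcard2 := Fintype.card_le_of_injective φ hinj
  simp only [Fintype.card_fun, Fintype.card_fin] at hcard2
  omega

end Traj

set_option maxHeartbeats 2000000 in
/-- Lower bound for gradient-Hölder functions: for
`ε ∈ (0, c₁/(132d·2^{3+γ₁}))`, `κ = (c₁/(528d))^{d/(1+γ₁)}`, every positive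
`n < κ/ε^{d/(1+γ₁)}` and every deterministic algorithm `A`, there is a
`(c₁,γ₁)`-gradient-Hölder `f` such that the output of `A` run on `f` after `n` queries
is not an `ε`-approximation of `{f = a}`. -/
theorem stmt11 (d : ℕ) (hd : 1 ≤ d) (a c₁ γ₁ ε : ℝ) (hc : 0 < c₁)
    (hγ : γ₁ ∈ Set.Ioc (0 : ℝ) 1)
    (hε0 : 0 < ε) (hε1 : ε < c₁ / (132 * (d : ℝ) * (2 : ℝ) ^ (3 + γ₁)))
    (n : ℕ) (hn : 0 < n)
    (hnκ : (n : ℝ) < (c₁ / (528 * (d : ℝ))) ^ ((d : ℝ) / (1 + γ₁)) / ε ^ ((d : ℝ) / (1 + γ₁)))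
    (A : Algorithm d) :
    ∃ f : (Fin d → ℝ) → ℝ, GradHolderOn d c₁ γ₁ (unitCube d) f ∧
      ¬ IsEpsApprox d f a ε (A.outputAfter f n) := by
  classical
  obtain ⟨hγ0, hγ1⟩ := hγ
  have hd0 : (0:ℝ) < d := by exact_mod_cast hd
  have h1γ : (0:ℝ) < 1 + γ₁ := by linarith
  set X : ℝ := 528 * d * ε / c₁ with hXdef
  have hX0 : 0 < X := by positivity
  -- upper bound on X
  have hpow2 : (0:ℝ) < (2:ℝ) ^ (3 + γ₁) := Real.rpow_pos_of_pos two_pos _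
  have hX1 : X < (2:ℝ) ^ (-(1 + γ₁)) := by
    have h4 : (4:ℝ) / (2:ℝ) ^ (3 + γ₁) = (2:ℝ) ^ (-(1 + γ₁)) := by
      have h42 : (4:ℝ) = (2:ℝ) ^ ((2:ℝ)) := by
        rw [show ((2:ℝ):ℝ) = ((2:ℕ):ℝ) by norm_num, Real.rpow_natCast]; norm_num
      rw [h42, ← Real.rpow_sub two_pos]
      ring_nf
    rw [← h4]
    rw [hXdef, div_lt_div_iff₀ hc hpow2]
    have h6 : 528 * (d:ℝ) * ε < 528 * d * (c₁ / (132 * d * (2:ℝ) ^ (3 + γ₁))) := by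
      have : (528:ℝ) * d * ε = (528 * d) * ε := by ring
      rw [this]
      exact mul_lt_mul_of_pos_left hε1 (by positivity)
    have h5 : 528 * (d:ℝ) * (c₁ / (132 * d * 2 ^ (3+γ₁))) = 4 * c₁ / 2 ^ (3+γ₁) := by
      field_simp
      ring
    rw [h5] at h6
    calc 528 * (d:ℝ) * ε * (2:ℝ) ^ (3 + γ₁)
        < (4 * c₁ / 2 ^ (3+γ₁)) * (2:ℝ) ^ (3 + γ₁) := mul_lt_mul_of_pos_right h6 hpow2
      _ = 4 * c₁ := by field_simp
  -- the scale r
  set r : ℝ := X ^ ((1:ℝ)/(1 + γ₁)) with hrdef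
  have hr0 : 0 < r := Real.rpow_pos_of_pos hX0 _
  have hrhalf : r < 1/2 := by
    have h1 : r < ((2:ℝ) ^ (-(1 + γ₁))) ^ ((1:ℝ)/(1 + γ₁)) :=
      Real.rpow_lt_rpow hX0.le hX1 (by positivity)
    have h2 : ((2:ℝ) ^ (-(1 + γ₁))) ^ ((1:ℝ)/(1 + γ₁)) = (2:ℝ) ^ (-(1:ℝ)) := by
      rw [← Real.rpow_mul (by norm_num : (0:ℝ) ≤ 2)]
      congr 1
      field_simp
    rw [h2] at h1
    rw [Real.rpow_neg_one] at h1
    linarith [h1]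
  have hrX : r ^ (1 + γ₁) = X := by
    rw [hrdef, ← Real.rpow_mul hX0.le]
    rw [show (1:ℝ)/(1 + γ₁) * (1 + γ₁) = 1 by field_simp]
    exact Real.rpow_one X
  -- grid size m
  set m : ℕ := ⌈1/r⌉₊ with hmdef
  have hinvr2 : (2:ℝ) < 1/r := by
    rw [lt_div_iff₀ hr0]
    linarith
  have hm_ge : 1/r ≤ (m:ℝ) := Nat.le_ceil _
  have hm_pos : 0 < m := by
    rw [hmdef, Nat.ceil_pos]
    positivity
  have hm0 : (0:ℝ) < m := by exact_mod_cast hm_pos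
  have hm_le : (m:ℝ) ≤ 3/(2*r) := by
    have h1 : (m:ℝ) < 1/r + 1 := Nat.ceil_lt_add_one (by positivity)
    have h2 : 1/r + 1 ≤ 3/(2*r) := by
      rw [div_add' _ _ _ hr0.ne', div_le_div_iff₀ hr0 (by positivity)]
      ring_nf
      nlinarith [hr0, hrhalf]
    linarith
  set ρ : ℝ := 1/(2*(m:ℝ)) with hρdef
  have hρ0 : 0 < ρ := by positivity
  have hρr : r/3 ≤ ρ := by
    rw [hρdef, div_le_div_iff₀ (by norm_num) (by positivity)]
    have := mul_le_mul_of_nonneg_left hm_le (by linarith [hr0] : (0:ℝ) ≤ 2*r)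
    calc r * (2*(m:ℝ)) = (2*r) * m := by ring
      _ ≤ (2*r) * (3/(2*r)) := mul_le_mul_of_nonneg_left hm_le (by linarith [hr0])
      _ = 3 := by field_simp
      _ = 1 * 3 := by ring
  -- n < m ^ d
  have hnm : n < m ^ d := by
    have hq : ((d:ℝ)/(1 + γ₁)) = (1:ℝ)/(1+γ₁) * (d:ℝ) := by ring
    have hRHS : (c₁ / (528 * (d:ℝ))) ^ ((d : ℝ) / (1 + γ₁)) / ε ^ ((d : ℝ) / (1 + γ₁))
        = (1/r) ^ (d:ℕ) := by
      rw [← Real.div_rpow (by positivity) hε0.le]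
      have hbase : c₁ / (528 * (d:ℝ)) / ε = X⁻¹ := by
        rw [hXdef]
        field_simp
      rw [hbase]
      rw [Real.inv_rpow hX0.le, one_div, ← Real.rpow_natCast r⁻¹ d, Real.inv_rpow hr0.le,
        hrdef, ← Real.rpow_mul hX0.le, ← hq]
    rw [hRHS] at hnκ
    have h2 : ((1:ℝ)/r) ^ (d:ℕ) ≤ (m:ℝ) ^ (d:ℕ) :=
      pow_le_pow_left₀ (by positivity) hm_ge d
    have h3 : (n:ℝ) < ((m:ℕ):ℝ) ^ (d:ℕ) := lt_of_lt_of_le hnκ h2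
    exact_mod_cast h3
  -- Hölder budget
  have hρpow : (0:ℝ) < ρ ^ (1 + γ₁) := Real.rpow_pos_of_pos hρ0 _
  have hbudget : (2*ε*(24*(d:ℝ))/ρ^2) ^ γ₁ * (2*ε*8/ρ) ^ (1-γ₁) ≤ c₁ := by
    set K : ℝ := 48 * d * ε with hKdef
    have hK0 : 0 < K := by positivity
    have hCeq : 2*ε*(24*(d:ℝ))/ρ^2 = K/ρ^2 := by rw [hKdef]; ring_nf
    have hBle : 2*ε*8/ρ ≤ K/ρ := by
      apply div_le_div_of_nonneg_right _ hρ0.le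
      rw [hKdef]
      have hd1 : (1:ℝ) ≤ d := by exact_mod_cast hd
      nlinarith [hd1, hε0]
    have hmono : (2*ε*(24*(d:ℝ))/ρ^2) ^ γ₁ * (2*ε*8/ρ) ^ (1-γ₁)
        ≤ (K/ρ^2) ^ γ₁ * (K/ρ) ^ (1-γ₁) := by
      rw [hCeq]
      apply mul_le_mul_of_nonneg_left
        (Real.rpow_le_rpow (by positivity) hBle (by linarith))
        (Real.rpow_nonneg (by positivity) _)
    have heq : (K/ρ^2) ^ γ₁ * (K/ρ) ^ (1-γ₁) = K / ρ ^ (1 + γ₁) := by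
      rw [Real.div_rpow hK0.le (by positivity), Real.div_rpow hK0.le hρ0.le]
      rw [div_mul_div_comm, ← Real.rpow_add hK0]
      rw [show γ₁ + (1 - γ₁) = 1 by ring, Real.rpow_one]
      congr 1
      rw [← Real.rpow_natCast ρ 2, ← Real.rpow_mul hρ0.le, ← Real.rpow_add hρ0]
      congr 1
      push_cast
      ring
    have h3pos : (0:ℝ) < (3:ℝ) ^ (1+γ₁) := Real.rpow_pos_of_pos (by norm_num) _
    have h3p : (3:ℝ) ^ (1+γ₁) ≤ 9 := by
      have h := Real.rpow_le_rpow_of_exponent_le (by norm_num : (1:ℝ) ≤ 3)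
        (by linarith : 1+γ₁ ≤ (2:ℝ))
      rw [show ((2:ℝ)) = ((2:ℕ):ℝ) by norm_num, Real.rpow_natCast] at h
      norm_num at h
      linarith
    have hfinal : K / ρ ^ (1+γ₁) ≤ c₁ := by
      rw [div_le_iff₀ hρpow]
      have h1 : (r/3)^(1+γ₁) ≤ ρ^(1+γ₁) :=
        Real.rpow_le_rpow (by positivity) hρr (by linarith)
      have h2 : (r/3)^(1+γ₁) = X / 3^(1+γ₁) := by
        rw [Real.div_rpow hr0.le (by norm_num), hrX]
      have h3 : X / 9 ≤ X / 3^(1+γ₁) := by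
        apply div_le_div_of_nonneg_left hX0.le h3pos h3p
      have hrr : X/9 ≤ ρ^(1+γ₁) := by
        rw [h2] at h1
        linarith
      have h4 : c₁ * (X/9) = 528*d*ε/9 := by
        rw [hXdef]
        field_simp
      have h5 := mul_le_mul_of_nonneg_left hrr hc.le
      rw [h4] at h5
      rw [hKdef]
      nlinarith [hd0, hε0]
    calc (2*ε*(24*(d:ℝ))/ρ^2) ^ γ₁ * (2*ε*8/ρ) ^ (1-γ₁)
        ≤ (K/ρ^2) ^ γ₁ * (K/ρ) ^ (1-γ₁) := hmono
      _ = K / ρ ^ (1 + γ₁) := heq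
      _ ≤ c₁ := hfinal
  -- the constant function and its query points
  set f0 : (Fin d → ℝ) → ℝ := fun _ => a with hf0def
  set p : Fin n → (Fin d → ℝ) := fun i => A.point f0 i with hpdef
  obtain ⟨cc, hc_far⟩ := exists_far_center (d := d) hnm p
  set z : Fin d → ℝ := fun j => (2*((cc j : ℕ):ℝ)+1)/(2*(m:ℝ)) with hzdef
  have hz_cube : z ∈ unitCube d := by
    rw [unitCube, Set.mem_Icc]
    constructor
    · rw [Pi.le_def]
      intro j
      show (0:ℝ) ≤ (2*((cc j : ℕ):ℝ)+1)/(2*(m:ℝ))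
      positivity
    · rw [Pi.le_def]
      intro j
      show (2*((cc j : ℕ):ℝ)+1)/(2*(m:ℝ)) ≤ (1 : ℝ)
      rw [div_le_one (by positivity)]
      have hlt : (cc j : ℕ) < m := (cc j).isLt
      have : ((cc j : ℕ):ℝ) + 1 ≤ (m:ℝ) := by exact_mod_cast hlt
      linarith
  have hfar : ∀ i : Fin n, bumpF d a (2*ε) ρ z (p i) = a := by
    intro i
    have h1 : ρ ≤ ‖p i - z‖ := hc_far i
    have h2 : ∃ j, ρ ≤ |(p i) j - z j| := by
      by_contra hcon
      push_neg at hcon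
      have hlt : ‖p i - z‖ < ρ := by
        rw [pi_norm_lt_iff hρ0]
        intro j
        simpa [Real.norm_eq_abs] using hcon j
      linarith
    obtain ⟨j, hj⟩ := h2
    exact bumpF_far hρ0 j hj
  by_cases hcase : unitCube d ⊆ A.outputAfter f0 n
  · -- adversarial bump function
    set g := bumpF d a (2*ε) ρ z with hgdef
    have hout : A.outputAfter g n = A.outputAfter f0 n := by
      apply outputAfter_congr A f0 g n
      intro k hk
      show f0 (A.point f0 k) = g (A.point f0 k)
      have := hfar ⟨k, hk⟩
      rw [hpdef] at this
      rw [hgdef, hf0def]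
      exact this.symm
    refine ⟨g, ?_, ?_⟩
    · exact ⟨g, contDiff_bumpF _ _ _ _, fun x _ => rfl,
        fun x _ y _ => gradHolder_bumpF hρ0 (by positivity) hd hγ0 hγ1 hbudget x y⟩
    · rintro ⟨hsub1, hsub2⟩
      have hzS : z ∈ A.outputAfter g n := by
        rw [hout]
        exact hcase hz_cube
      obtain ⟨-, habs⟩ := hsub2 hzS
      have hgz : g z = a + 2*ε := bumpF_center a (2*ε) hρ0.ne' z
      rw [hgz] at habs
      rw [show a + 2*ε - a = 2*ε by ring, abs_of_pos (by linarith)] at habs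
      linarith
  · -- constant function
    refine ⟨f0, ?_, ?_⟩
    · refine ⟨f0, by rw [hf0def]; exact contDiff_const, fun x _ => rfl, ?_⟩
      intro x _ y _
      have hgv : ∀ w, gradVec d f0 w = 0 := by
        intro w
        funext j
        rw [gradVec, hf0def]
        rw [fderiv_const_apply a]
        simp
      rw [hgv, hgv]
      simp only [sub_zero, norm_zero]
      have := Real.rpow_nonneg (norm_nonneg (x - y)) γ₁
      positivity
    · rintro ⟨hsub1, hsub2⟩
      obtain ⟨x0, hx0cube, hx0not⟩ := Set.not_subset.mp hcase
      exact hx0not (hsub1 ⟨hx0cube, rfl⟩)
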